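/- Let λ₁, λ₂ > 0 and k > 0. The vector field ψ_k(y) := (sin(k|y|)/(k²|y|³) − cos(k|y|)/(k|y|²)) y on ℝ³ ∖ {0} satisfies the Lamé eigenvalue equation −div(Σ(ψ_k))(y) = (2λ₁ + λ₂) k² ψ_k(y) for every y ∈ ℝ³ ∖ {0}; equivalently, λ₁ Δψ_k(y) + (λ₁ + λ₂) ∇(div ψ_k)(y) = −(2λ₁ + λ₂) k² ψ_k(y), where Δ acts componentwise and div(Σ(ψ_k)) denotes the row-wise divergence of the matrix field Σ(ψ_k). Thus ψ_k is an eigenfunction of the Lamé operator −div Σ with eigenvalue μ = (2λ₁ + λ₂) k². -/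

import Mathlib

open Real

/-- The radial vector field `ψ_k(y) = (sin(k|y|)/(k²|y|³) − cos(k|y|)/(k|y|²)) y`
on `ℝ³ ∖ {0}`. -/
noncomputable def psi (k : ℝ) (y : EuclideanSpace ℝ (Fin 3)) : EuclideanSpace ℝ (Fin 3) :=
  (Real.sin (k * ‖y‖) / (k ^ 2 * ‖y‖ ^ 3) - Real.cos (k * ‖y‖) / (k * ‖y‖ ^ 2)) • y

/-- The `i`-th partial derivative of a scalar function on `ℝ³`. -/
noncomputable def pd (i : Fin 3) (g : EuclideanSpace ℝ (Fin 3) → ℝ)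
    (y : EuclideanSpace ℝ (Fin 3)) : ℝ :=
  fderiv ℝ g y (EuclideanSpace.single i 1)

/-- The linear–elastic stress tensor
`Σ(v) = 2λ₁ ε(v) + λ₂ div(v) Id`, with `ε(v) = (Dv + Dvᵀ)/2`, written
entrywise: `Σ(v)_{ij} = λ₁ (∂_j v_i + ∂_i v_j) + λ₂ (div v) δ_{ij}`. -/
noncomputable def stress (l1 l2 : ℝ) (v : EuclideanSpace ℝ (Fin 3) → EuclideanSpace ℝ (Fin 3))
    (y : EuclideanSpace ℝ (Fin 3)) (i j : Fin 3) : ℝ :=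
  l1 * (pd j (fun z => v z i) y + pd i (fun z => v z j) y) +
    l2 * (∑ m : Fin 3, pd m (fun z => v z m) y) * (if i = j then (1 : ℝ) else 0)

local notation "E3" => EuclideanSpace ℝ (Fin 3)

/-! ### Scalar radial profiles -/

noncomputable def fR (k r : ℝ) : ℝ :=
  Real.sin (k * r) / (k ^ 2 * r ^ 3) - Real.cos (k * r) / (k * r ^ 2)

noncomputable def gR (k r : ℝ) : ℝ :=
  3 * Real.cos (k * r) / (k * r ^ 4) - 3 * Real.sin (k * r) / (k ^ 2 * r ^ 5)
    + Real.sin (k * r) / r ^ 3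

noncomputable def gR' (k r : ℝ) : ℝ :=
  k * Real.cos (k * r) / r ^ 3 - 6 * Real.sin (k * r) / r ^ 4
    - 15 * Real.cos (k * r) / (k * r ^ 5) + 15 * Real.sin (k * r) / (k ^ 2 * r ^ 6)

lemma hasDerivAt_sin_k (k r : ℝ) :
    HasDerivAt (fun t => Real.sin (k * t)) (Real.cos (k * r) * k) r := by
  simpa [Function.comp_def] using (Real.hasDerivAt_sin (k * r)).comp r ((hasDerivAt_id r).const_mul k)

lemma hasDerivAt_cos_k (k r : ℝ) :
    HasDerivAt (fun t => Real.cos (k * t)) (-Real.sin (k * r) * k) r := by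
  simpa [Function.comp_def] using (Real.hasDerivAt_cos (k * r)).comp r ((hasDerivAt_id r).const_mul k)

lemma hasDerivAt_fR {k r : ℝ} (hk : k ≠ 0) (hr : r ≠ 0) :
    HasDerivAt (fR k) (r * gR k r) r := by
  have h1 : HasDerivAt (fun t : ℝ => k ^ 2 * t ^ 3) (k ^ 2 * (3 * r ^ 2)) r := by
    simpa [mul_comm] using (hasDerivAt_pow 3 r).const_mul (k ^ 2)
  have h2 : HasDerivAt (fun t : ℝ => k * t ^ 2) (k * (2 * r)) r := by
    simpa [mul_comm] using (hasDerivAt_pow 2 r).const_mul k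
  have hd1 : (k ^ 2 * r ^ 3 : ℝ) ≠ 0 := by positivity
  have hd2 : (k * r ^ 2 : ℝ) ≠ 0 := by positivity
  have := ((hasDerivAt_sin_k k r).div h1 hd1).sub ((hasDerivAt_cos_k k r).div h2 hd2)
  refine this.congr_deriv ?_
  unfold gR; field_simp; ring

lemma hasDerivAt_gR {k r : ℝ} (hk : k ≠ 0) (hr : r ≠ 0) :
    HasDerivAt (gR k) (gR' k r) r := by
  have h1 : HasDerivAt (fun t : ℝ => k * t ^ 4) (k * (4 * r ^ 3)) r := by
    simpa [mul_comm] using (hasDerivAt_pow 4 r).const_mul k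
  have h2 : HasDerivAt (fun t : ℝ => k ^ 2 * t ^ 5) (k ^ 2 * (5 * r ^ 4)) r := by
    simpa [mul_comm] using (hasDerivAt_pow 5 r).const_mul (k ^ 2)
  have h3 : HasDerivAt (fun t : ℝ => t ^ 3) (3 * r ^ 2) r := by
    simpa using hasDerivAt_pow 3 r
  have hd1 : (k * r ^ 4 : ℝ) ≠ 0 := by positivity
  have hd2 : (k ^ 2 * r ^ 5 : ℝ) ≠ 0 := by positivity
  have hd3 : (r ^ 3 : ℝ) ≠ 0 := by positivity
  have := ((((hasDerivAt_cos_k k r).const_mul 3).div h1 hd1).sub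
      (((hasDerivAt_sin_k k r).const_mul 3).div h2 hd2)).add
      ((hasDerivAt_sin_k k r).div h3 hd3)
  refine this.congr_deriv ?_
  unfold gR'; field_simp; ring

lemma keyODE {k r : ℝ} (hk : k ≠ 0) (hr : r ≠ 0) :
    r * gR' k r + 5 * gR k r = -(k ^ 2) * fR k r := by
  unfold fR gR gR'; field_simp; ring

/-! ### Basic Euclidean facts -/

lemma hasFDerivAt_norm3 (y : E3) (hy : y ≠ 0) :
    HasFDerivAt (fun z : E3 => ‖z‖) ((‖y‖⁻¹ : ℝ) • (innerSL ℝ y)) y := by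
  have hr : ‖y‖ ≠ 0 := norm_ne_zero_iff.mpr hy
  have hs : (‖y‖ ^ 2 : ℝ) ≠ 0 := pow_ne_zero _ hr
  have h1 : HasFDerivAt (fun z : E3 => ‖z‖ ^ 2) (2 • (innerSL ℝ y)) y :=
    (hasStrictFDerivAt_norm_sq y).hasFDerivAt
  have h2 := (Real.hasDerivAt_sqrt hs).comp_hasFDerivAt y h1
  have h3 : HasFDerivAt (fun z : E3 => Real.sqrt (‖z‖ ^ 2))
      ((1 / (2 * Real.sqrt (‖y‖ ^ 2))) • 2 • (innerSL ℝ y)) y := h2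
  have hfun : (fun z : E3 => Real.sqrt (‖z‖ ^ 2)) = fun z : E3 => ‖z‖ := by
    funext z; rw [Real.sqrt_sq (norm_nonneg z)]
  rw [hfun] at h3
  refine h3.congr_fderiv ?_
  rw [Real.sqrt_sq (norm_nonneg y)]
  ext v
  simp [smul_smul]
  ring

lemma coord_hasFDerivAt (i : Fin 3) (y : E3) :
    HasFDerivAt (fun z : E3 => z i) (PiLp.proj 2 (fun _ : Fin 3 => ℝ) i : E3 →L[ℝ] ℝ) y :=
  (PiLp.proj 2 (fun _ : Fin 3 => ℝ) i : E3 →L[ℝ] ℝ).hasFDerivAt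

lemma inner_single (y : E3) (m : Fin 3) : (innerSL ℝ y) (EuclideanSpace.single m 1) = y m := by
  simp [EuclideanSpace.inner_single_right]

lemma proj_single (i m : Fin 3) :
    (PiLp.proj 2 (fun _ : Fin 3 => ℝ) i : E3 →L[ℝ] ℝ) (EuclideanSpace.single m 1)
      = if m = i then 1 else 0 := by
  simp [EuclideanSpace.single_apply, eq_comm]

lemma normsq3 (y : E3) : ‖y‖ ^ 2 = (y 0) ^ 2 + (y 1) ^ 2 + (y 2) ^ 2 := by
  rw [EuclideanSpace.norm_eq, Real.sq_sqrt (by positivity)]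
  simp [Fin.sum_univ_three, sq_abs]

/-! ### First derivatives of `ψ` -/

lemma psi_apply (k : ℝ) (y : E3) (i : Fin 3) : psi k y i = fR k ‖y‖ * y i := by
  simp [psi, fR, PiLp.smul_apply]

lemma hasFDerivAt_psi_comp (k : ℝ) (hk : k ≠ 0) (y : E3) (hy : y ≠ 0) (i : Fin 3) :
    HasFDerivAt (fun z : E3 => psi k z i)
      ((fR k ‖y‖) • (PiLp.proj 2 (fun _ : Fin 3 => ℝ) i : E3 →L[ℝ] ℝ)
        + (y i) • ((‖y‖ * gR k ‖y‖) • ((‖y‖⁻¹ : ℝ) • (innerSL ℝ y)))) y := by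
  have hr : ‖y‖ ≠ 0 := norm_ne_zero_iff.mpr hy
  have h1 : HasFDerivAt (fun z : E3 => fR k ‖z‖)
      ((‖y‖ * gR k ‖y‖) • ((‖y‖⁻¹ : ℝ) • (innerSL ℝ y))) y :=
    (hasDerivAt_fR hk hr).comp_hasFDerivAt y (hasFDerivAt_norm3 y hy)
  have h2 : HasFDerivAt (fun z : E3 => z i)
      (PiLp.proj 2 (fun _ : Fin 3 => ℝ) i : E3 →L[ℝ] ℝ) y :=
    (PiLp.proj 2 (fun _ : Fin 3 => ℝ) i : E3 →L[ℝ] ℝ).hasFDerivAt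
  have h3 := h1.mul h2
  have hfun : (fun z : E3 => psi k z i) = fun z : E3 => fR k ‖z‖ * z i := by
    funext z; exact psi_apply k z i
  rw [hfun]
  exact h3

lemma pd_psi {k : ℝ} (hk : k ≠ 0) {y : E3} (hy : y ≠ 0) (i m : Fin 3) :
    pd m (fun z => psi k z i) y
      = gR k ‖y‖ * (y i * y m) + fR k ‖y‖ * (if m = i then 1 else 0) := by
  have hr : ‖y‖ ≠ 0 := norm_ne_zero_iff.mpr hy
  have h := (hasFDerivAt_psi_comp k hk y hy i).fderiv
  rw [pd, h]
  simp [proj_single, inner_single]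
  rcases eq_or_ne m i with hmi | hmi
  · subst hmi; field_simp; ring
  · simp [hmi, Ne.symm hmi]; field_simp

lemma sum_pd_psi {k : ℝ} (hk : k ≠ 0) {z : E3} (hz : z ≠ 0) :
    (∑ m : Fin 3, pd m (fun w => psi k w m) z) = gR k ‖z‖ * ‖z‖ ^ 2 + 3 * fR k ‖z‖ := by
  rw [Fin.sum_univ_three, pd_psi hk hz 0 0, pd_psi hk hz 1 1, pd_psi hk hz 2 2, normsq3 z]
  simp; ring

theorem statement_3 (l1 l2 k : ℝ) (hl1 : 0 < l1) (hl2 : 0 < l2) (hk : 0 < k) :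
    ∀ y : EuclideanSpace ℝ (Fin 3), y ≠ 0 → ∀ i : Fin 3,
      -(∑ j : Fin 3, pd j (fun z => stress l1 l2 (psi k) z i j) y) =
        (2 * l1 + l2) * k ^ 2 * psi k y i := by
  intro y hy i
  have hk' : k ≠ 0 := ne_of_gt hk
  have hr : ‖y‖ ≠ 0 := norm_ne_zero_iff.mpr hy
  have hsum : (y 0) ^ 2 + (y 1) ^ 2 + (y 2) ^ 2 = ‖y‖ ^ 2 := (normsq3 y).symm
  have hode := keyODE hk' hr
  have hinv : ‖y‖ * ‖y‖⁻¹ = 1 := mul_inv_cancel₀ hr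
  have hpdT : ∀ j : Fin 3, pd j (fun z => stress l1 l2 (psi k) z i j) y =
      l1 * (2 * gR' k ‖y‖ * y i * (y j) ^ 2 / ‖y‖ + 2 * gR k ‖y‖ * y i)
        + (4 * l1 * gR k ‖y‖ * y j
            + l2 * (gR' k ‖y‖ * ‖y‖ * y j + 5 * gR k ‖y‖ * y j))
          * (if i = j then 1 else 0) := by
    intro j
    have hnorm := hasFDerivAt_norm3 y hy
    have hg : HasFDerivAt (fun z : E3 => gR k ‖z‖)
        ((gR' k ‖y‖) • ((‖y‖⁻¹ : ℝ) • innerSL ℝ y)) y :=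
      (hasDerivAt_gR hk' hr).comp_hasFDerivAt y hnorm
    have hf : HasFDerivAt (fun z : E3 => fR k ‖z‖)
        ((‖y‖ * gR k ‖y‖) • ((‖y‖⁻¹ : ℝ) • innerSL ℝ y)) y :=
      (hasDerivAt_fR hk' hr).comp_hasFDerivAt y hnorm
    have hpi := coord_hasFDerivAt i y
    have hpj := coord_hasFDerivAt j y
    have hzzij := hpi.mul hpj
    have hzzji := hpj.mul hpi
    have hnsq : HasFDerivAt (fun z : E3 => ‖z‖ ^ 2) (2 • (innerSL ℝ y)) y :=
      (hasStrictFDerivAt_norm_sq y).hasFDerivAt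
    have hT : HasFDerivAt (fun z : E3 =>
        l1 * (gR k ‖z‖ * (z i * z j) + fR k ‖z‖ * (if i = j then (1:ℝ) else 0)
          + (gR k ‖z‖ * (z j * z i) + fR k ‖z‖ * (if i = j then (1:ℝ) else 0)))
        + l2 * ((gR k ‖z‖ * ‖z‖ ^ 2 + 3 * fR k ‖z‖) * (if i = j then (1:ℝ) else 0)))
        (l1 • (((gR k ‖y‖) • ((y i) • (PiLp.proj 2 (fun _ : Fin 3 => ℝ) j : E3 →L[ℝ] ℝ)
                  + (y j) • (PiLp.proj 2 (fun _ : Fin 3 => ℝ) i : E3 →L[ℝ] ℝ))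
              + (y i * y j) • ((gR' k ‖y‖) • ((‖y‖⁻¹ : ℝ) • innerSL ℝ y))
              + (if i = j then (1:ℝ) else 0) • ((‖y‖ * gR k ‖y‖) • ((‖y‖⁻¹ : ℝ) • innerSL ℝ y)))
            + ((gR k ‖y‖) • ((y j) • (PiLp.proj 2 (fun _ : Fin 3 => ℝ) i : E3 →L[ℝ] ℝ)
                  + (y i) • (PiLp.proj 2 (fun _ : Fin 3 => ℝ) j : E3 →L[ℝ] ℝ))
              + (y j * y i) • ((gR' k ‖y‖) • ((‖y‖⁻¹ : ℝ) • innerSL ℝ y))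
              + (if i = j then (1:ℝ) else 0) • ((‖y‖ * gR k ‖y‖) • ((‖y‖⁻¹ : ℝ) • innerSL ℝ y))))
          + l2 • ((if i = j then (1:ℝ) else 0) •
              ((gR k ‖y‖) • (2 • (innerSL ℝ y))
                + (‖y‖ ^ 2) • ((gR' k ‖y‖) • ((‖y‖⁻¹ : ℝ) • innerSL ℝ y))
                + (3 : ℝ) • ((‖y‖ * gR k ‖y‖) • ((‖y‖⁻¹ : ℝ) • innerSL ℝ y))))) y := by
      exact ((((hg.mul hzzij).add (hf.mul_const _)).add
          ((hg.mul hzzji).add (hf.mul_const _))).const_mul l1).add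
        ((((hg.mul hnsq).add (hf.const_mul 3)).mul_const _).const_mul l2)
    have hev : (fun z => stress l1 l2 (psi k) z i j) =ᶠ[nhds y] (fun z : E3 =>
        l1 * (gR k ‖z‖ * (z i * z j) + fR k ‖z‖ * (if i = j then (1:ℝ) else 0)
          + (gR k ‖z‖ * (z j * z i) + fR k ‖z‖ * (if i = j then (1:ℝ) else 0)))
        + l2 * ((gR k ‖z‖ * ‖z‖ ^ 2 + 3 * fR k ‖z‖) * (if i = j then (1:ℝ) else 0))) := by
      filter_upwards [compl_singleton_mem_nhds hy] with z hz
      have hz' : z ≠ 0 := hz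
      simp only [stress]
      rw [pd_psi hk' hz' i j, pd_psi hk' hz' j i, sum_pd_psi hk' hz']
      rcases eq_or_ne i j with hij | hij
      · subst hij; simp
      · simp [hij, Ne.symm hij]
    rw [pd, hev.fderiv_eq, hT.fderiv]
    simp only [ContinuousLinearMap.add_apply, ContinuousLinearMap.smul_apply,
      proj_single, inner_single, smul_eq_mul]
    rcases eq_or_ne i j with hij | hij
    · subst hij; simp; field_simp; ring
    · simp [hij, Ne.symm hij]
      left
      field_simp; ring
  rw [Fin.sum_univ_three, hpdT 0, hpdT 1, hpdT 2, psi_apply]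
  fin_cases i
  · simp
    linear_combination (-(2 * l1 * gR' k ‖y‖ * y 0 / ‖y‖)) * hsum
      + (-((2 * l1 + l2) * y 0)) * hode
      + (-(2 * l1 * gR' k ‖y‖ * y 0 * ‖y‖)) * hinv
  · simp
    linear_combination (-(2 * l1 * gR' k ‖y‖ * y 1 / ‖y‖)) * hsum
      + (-((2 * l1 + l2) * y 1)) * hode
      + (-(2 * l1 * gR' k ‖y‖ * y 1 * ‖y‖)) * hinv
  · simp
    linear_combination (-(2 * l1 * gR' k ‖y‖ * y 2 / ‖y‖)) * hsum
      + (-((2 * l1 + l2) * y 2)) * hode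
      + (-(2 * l1 * gR' k ‖y‖ * y 2 * ‖y‖)) * hinv
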